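/- Let S be a finite set of coordinates that is prefix-closed (every prefix of a member of S belongs to S), and let x, e ∈ S. Then there exists a sequence x = v_0, v_1, …, v_k = e of elements of S such that for each i, either v_{i+1} = dropLast(v_i) or v_i = dropLast(v_{i+1}) (consecutive coordinates are related as parent and child in the prefix tree), δ_TD(v_{i+1}, e) < δ_TD(v_i, e) for all i, and k = δ_TD(x, e). In particular, greedy routing along tree edges reaches e from x in exactly δ_TD(x, e) hops, and δ_TD(x, e) equals the length of the tree route between x and e. -/
import Mathlib


/-- The common prefix length of two lists. -/
def cpl {α : Type*} [DecidableEq α] : List α → List α → ℕ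
  | a :: as, b :: bs => if a = b then cpl as bs + 1 else 0
  | _, _ => 0


lemma cpl_nil_left {α : Type*} [DecidableEq α] (y : List α) : cpl ([] : List α) y = 0 := by
  cases y <;> rfl

lemma cpl_nil_right {α : Type*} [DecidableEq α] (x : List α) : cpl x ([] : List α) = 0 := by
  cases x <;> rfl

lemma cpl_le_left {α : Type*} [DecidableEq α] : ∀ x y : List α, cpl x y ≤ x.length
  | [], y => by simp [cpl_nil_left]
  | a :: as, [] => by simp [cpl_nil_right]
  | a :: as, b :: bs => by
    simp only [cpl, List.length_cons]
    split
    · exact Nat.succ_le_succ (cpl_le_left as bs)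
    · exact Nat.zero_le _

lemma cpl_le_right {α : Type*} [DecidableEq α] : ∀ x y : List α, cpl x y ≤ y.length
  | [], y => by simp [cpl_nil_left]
  | a :: as, [] => by simp [cpl_nil_right]
  | a :: as, b :: bs => by
    simp only [cpl, List.length_cons]
    split
    · exact Nat.succ_le_succ (cpl_le_right as bs)
    · exact Nat.zero_le _

lemma take_cpl_eq {α : Type*} [DecidableEq α] : ∀ x y : List α, x.take (cpl x y) = y.take (cpl x y)
  | [], y => by simp [cpl_nil_left]
  | a :: as, [] => by simp [cpl_nil_right]
  | a :: as, b :: bs => by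
    simp only [cpl]
    split
    · next h => simp [h, List.take_succ_cons, take_cpl_eq as bs]
    · simp

lemma cpl_take_left {α : Type*} [DecidableEq α] :
    ∀ (x y : List α) (j : ℕ), cpl x y ≤ j → cpl (x.take j) y = cpl x y
  | [], y, j, _ => by simp [cpl_nil_left]
  | a :: as, [], j, _ => by simp [cpl_nil_right]
  | a :: as, b :: bs, 0, h => by
    simp only [cpl] at h
    split at h
    · omega
    · next hne => rw [List.take_zero, cpl_nil_left]; simp [cpl, hne]
  | a :: as, b :: bs, j + 1, h => by
    rw [List.take_succ_cons]
    simp only [cpl] at h ⊢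
    by_cases hab : a = b
    · simp only [if_pos hab] at h ⊢
      rw [cpl_take_left as bs j (by omega)]
    · simp [hab]

lemma cpl_take_self {α : Type*} [DecidableEq α] :
    ∀ (t : ℕ) (y : List α), cpl (y.take t) y = min t y.length
  | t, [] => by simp [cpl_nil_right]
  | 0, b :: bs => by simp [cpl_nil_left]
  | t + 1, b :: bs => by
    rw [List.take_succ_cons]
    simp only [cpl]
    rw [if_true, cpl_take_self t bs]
    simp only [List.length_cons]
    omega

lemma dropLast_take' {α : Type*} (l : List α) (n : ℕ) (h : n ≤ l.length) :
    (l.take n).dropLast = l.take (n - 1) := by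
  rw [List.dropLast_eq_take, List.length_take, List.take_take]
  congr 1
  omega


/-- The tree distance `δ_TD x y = |x| + |y| - 2 · cpl x y`. -/
def deltaTD {α : Type*} [DecidableEq α] (x y : List α) : ℤ :=
  (x.length : ℤ) + y.length - 2 * cpl x y

/-- In a prefix-closed finite set `S` of coordinates, for any `x, e ∈ S` there is a
sequence `x = v 0, v 1, …, v k = e` inside `S` whose consecutive members are related as
parent and child in the prefix tree, along which `δ_TD · e` strictly decreases, and whose
length is exactly `k = δ_TD x e`: greedy routing along tree edges reaches `e` from `x`
in exactly `δ_TD x e` hops, which is the length of the tree route. -/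
theorem greedy_tree_route {α : Type*} [DecidableEq α] (S : Finset (List α))
    (hS : ∀ c ∈ S, ∀ p : List α, p <+: c → p ∈ S)
    (x e : List α) (hx : x ∈ S) (he : e ∈ S) :
    ∃ (k : ℕ) (v : ℕ → List α), v 0 = x ∧ v k = e ∧
      (∀ i ≤ k, v i ∈ S) ∧
      (∀ i < k, v (i + 1) = (v i).dropLast ∨ v i = (v (i + 1)).dropLast) ∧
      (∀ i < k, deltaTD (v (i + 1)) e < deltaTD (v i) e) ∧
      (k : ℤ) = deltaTD x e := by
  classical
  set m := cpl x e with hm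
  have hmx : m ≤ x.length := cpl_le_left x e
  have hme : m ≤ e.length := cpl_le_right x e
  set a := x.length - m with ha
  set b := e.length - m with hb
  set v : ℕ → List α := fun i => if i ≤ a then x.take (x.length - i) else e.take (m + (i - a))
    with hv
  -- values
  have hv1 : ∀ i, i ≤ a → v i = x.take (x.length - i) := fun i h => if_pos h
  have hv2 : ∀ i, a ≤ i → v i = e.take (m + (i - a)) := by
    intro i hi
    rcases eq_or_lt_of_le hi with rfl | h
    · rw [hv1 a le_rfl]
      have h1 : x.length - a = m := by omega
      have h2 : m + (a - a) = m := by omega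
      rw [h1, h2, hm, take_cpl_eq x e]
    · exact if_neg (by omega)
  -- the distance along the route
  have hdelta : ∀ i, i ≤ a + b → deltaTD (v i) e = (a : ℤ) + b - i := by
    intro i hi
    by_cases hia : i ≤ a
    · rw [hv1 i hia]
      have hc : cpl (x.take (x.length - i)) e = m := cpl_take_left x e _ (by omega)
      have hl : (x.take (x.length - i)).length = x.length - i := by
        rw [List.length_take]; omega
      rw [deltaTD, hc, hl]
      push_cast
      omega
    · rw [hv2 i (by omega)]
      have hc : cpl (e.take (m + (i - a))) e = m + (i - a) := by
        rw [cpl_take_self]; omega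
      have hl : (e.take (m + (i - a))).length = m + (i - a) := by
        rw [List.length_take]; omega
      rw [deltaTD, hc, hl]
      push_cast
      omega
  refine ⟨a + b, v, ?_, ?_, ?_, ?_, ?_, ?_⟩
  · rw [hv1 0 (Nat.zero_le _)]
    simp
  · rw [hv2 (a + b) (by omega)]
    have : m + (a + b - a) = e.length := by omega
    rw [this, List.take_length]
  · intro i hi
    by_cases hia : i ≤ a
    · rw [hv1 i hia]; exact hS x hx _ (List.take_prefix _ _)
    · rw [hv2 i (by omega)]; exact hS e he _ (List.take_prefix _ _)
  · intro i hi
    by_cases hia : i + 1 ≤ a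
    · left
      have hidx : x.length - i - 1 = x.length - (i + 1) := by omega
      rw [hv1 i (by omega), hv1 (i + 1) hia, dropLast_take' x _ (by omega), hidx]
    · right
      have hidx : m + (i + 1 - a) - 1 = m + (i - a) := by omega
      rw [hv2 i (by omega), hv2 (i + 1) (by omega), dropLast_take' e _ (by omega), hidx]
  · intro i hi
    rw [hdelta i (by omega), hdelta (i + 1) (by omega)]
    push_cast
    omega
  · have h0 : v 0 = x := by rw [hv1 0 (Nat.zero_le _)]; simp
    rw [← h0, hdelta 0 (Nat.zero_le _)]
    push_cast
    omega
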